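/- If w ∈ F_n and w^k is achiral for some nonzero integer k, then w is achiral. -/

import Mathlib

set_option linter.unusedSectionVars false

namespace UniqueRoots
open FreeGroup List

variable {α : Type*} [DecidableEq α]

/-- Non-cancellation relation for adjacent letters. -/
def R (a b : α × Bool) : Prop := ¬(a.1 = b.1 ∧ a.2 = !b.2)

lemma chain'_reduce (L : List (α × Bool)) : List.Chain' R (reduce L) := by
  induction L with
  | nil => exact List.isChain_nil
  | cons x L ih =>
    rw [reduce.cons]
    cases h : reduce L with
    | nil => exact List.isChain_singleton _
    | cons hd tl =>
      rw [h] at ih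
      dsimp only
      split_ifs with hc
      · exact ih.tail
      · exact List.isChain_cons_cons.2 ⟨hc, ih⟩

lemma reduce_eq_self_of_chain' {L : List (α × Bool)} (h : List.Chain' R L) :
    reduce L = L := by
  induction L with
  | nil => rfl
  | cons x L ih =>
    rw [reduce.cons, ih h.tail]
    cases L with
    | nil => rfl
    | cons y t =>
      dsimp only
      rw [if_neg (List.isChain_cons_cons.1 h).1]

lemma chain'_toWord (x : FreeGroup α) : List.Chain' R x.toWord := by
  rw [← reduce_toWord]; exact chain'_reduce _

lemma toWord_mul_eq {x y : FreeGroup α}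
    (h : ∀ a ∈ x.toWord.getLast?, ∀ b ∈ y.toWord.head?, R a b) :
    (x * y).toWord = x.toWord ++ y.toWord := by
  conv_lhs => rw [← mk_toWord (x := x), ← mk_toWord (x := y)]
  rw [mul_mk, toWord_mk]
  exact reduce_eq_self_of_chain'
    (List.isChain_append.2 ⟨chain'_toWord x, chain'_toWord y, h⟩)

/-- Cyclically-reduced predicate on words. -/
def Cyc (L : List (α × Bool)) : Prop :=
  ∀ a ∈ L.getLast?, ∀ b ∈ L.head?, R a b

lemma invRev_cons (p : α × Bool) (l : List (α × Bool)) :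
    invRev (p :: l) = invRev l ++ [(p.1, !p.2)] := by
  simp [invRev]

lemma head?_append_of_ne_nil {β : Type*} {l₁ l₂ : List β} (h : l₁ ≠ []) :
    (l₁ ++ l₂).head? = l₁.head? := by
  obtain ⟨a, l, rfl⟩ := List.exists_cons_of_ne_nil h
  rfl

lemma getLast?_append_of_ne_nil {β : Type*} {l₁ l₂ : List β} (h : l₂ ≠ []) :
    (l₁ ++ l₂).getLast? = l₂.getLast? := by
  cases hl : l₂.getLast? with
  | none => exact absurd (List.getLast?_eq_none_iff.1 hl) h
  | some a => simp [List.getLast?_append, hl]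

lemma head?_flatten_replicate {k : ℕ} (hk : k ≠ 0) {W : List (α × Bool)} (hW : W ≠ []) :
    ((List.replicate k W).flatten).head? = W.head? := by
  obtain ⟨m, rfl⟩ := Nat.exists_eq_succ_of_ne_zero hk
  rw [List.replicate_succ, List.flatten_cons, head?_append_of_ne_nil hW]

lemma getLast?_flatten_replicate {k : ℕ} (hk : k ≠ 0) {W : List (α × Bool)} (hW : W ≠ []) :
    ((List.replicate k W).flatten).getLast? = W.getLast? := by
  obtain ⟨m, rfl⟩ := Nat.exists_eq_succ_of_ne_zero hk
  rw [List.replicate_succ', List.flatten_append, List.flatten_cons, List.flatten_nil,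
    List.append_nil, getLast?_append_of_ne_nil hW]

lemma flatten_replicate_ne_nil {k : ℕ} (hk : k ≠ 0) {W : List (α × Bool)} (hW : W ≠ []) :
    (List.replicate k W).flatten ≠ [] := by
  obtain ⟨m, rfl⟩ := Nat.exists_eq_succ_of_ne_zero hk
  simp [List.replicate_succ, hW]

/-- Powers of a cyclically reduced element concatenate without cancellation. -/
lemma toWord_pow {s : FreeGroup α} (hs : Cyc s.toWord) (k : ℕ) :
    (s ^ k).toWord = (List.replicate k s.toWord).flatten := by
  induction k with
  | zero => simp
  | succ m ih =>
    rcases eq_or_ne s.toWord [] with hW | hW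
    · have : s = 1 := toWord_eq_nil_iff.1 hW
      simp [this]
    rw [pow_succ', toWord_mul_eq, ih, List.replicate_succ, List.flatten_cons]
    intro a ha b hb
    rw [ih] at hb
    rcases Nat.eq_zero_or_pos m with rfl | hm
    · simp at hb
    · rw [head?_flatten_replicate (Nat.pos_iff_ne_zero.1 hm) hW] at hb
      exact hs a ha b hb

/-- Cyclic decomposition: every element is a reduced conjugate of a cyclically
reduced element, exactly at the level of words. -/
lemma exists_decomp (x : FreeGroup α) : ∃ c s : FreeGroup α,
    x = c * s * c⁻¹ ∧ Cyc s.toWord ∧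
    x.toWord = c.toWord ++ s.toWord ++ invRev c.toWord := by
  generalize hN : x.toWord.length = N
  induction N using Nat.strong_induction_on generalizing x with
  | _ N ih =>
  by_cases hcyc : Cyc x.toWord
  · exact ⟨1, x, by group, hcyc, by simp [invRev]⟩
  · simp only [Cyc, not_forall] at hcyc
    obtain ⟨a, ha, b, hb, hab⟩ := hcyc
    simp only [R, not_not] at hab
    have haeq : a = (b.1, !b.2) := Prod.ext hab.1 hab.2
    have hne : x.toWord ≠ [] := by
      intro h; rw [h] at hb; simp at hb
    have hlen2 : 2 ≤ x.toWord.length := by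
      rcases hL : x.toWord with _ | ⟨p, _ | ⟨q, t⟩⟩
      · exact absurd hL hne
      · exfalso
        rw [hL] at ha hb
        simp only [List.getLast?_singleton, Option.mem_some_iff, List.head?_cons] at ha hb
        have : a = b := by rw [← ha, ← hb]
        rw [this] at hab
        simp at hab
      · simp
    obtain ⟨M, hM⟩ : ∃ M, x.toWord = b :: M ++ [a] := by
      rcases hL : x.toWord with _ | ⟨p, t⟩
      · exact absurd hL hne
      rw [hL] at ha hb
      have hpb : p = b := by simpa using hb
      have ht : t ≠ [] := by
        intro h
        rw [h] at hL; rw [hL] at hlen2; simp at hlen2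
      rcases List.eq_nil_or_concat t with rfl | ⟨t', q, rfl⟩
      · exact absurd rfl ht
      simp only [List.concat_eq_append] at ha hb hL ht
      have hqa : q = a := by
        have h2 : (p :: (t' ++ [q])).getLast? = some q := by
          rw [← List.cons_append, List.getLast?_concat]
        rw [h2] at ha
        simpa using ha
      exact ⟨t', by rw [hpb, hqa]; simp⟩
    set g : FreeGroup α := mk [b] with hg
    have hginv : g⁻¹ = mk [(b.1, !b.2)] := by
      rw [hg, inv_mk]; congr 1
    have hxeq : x = g * mk M * g⁻¹ := by
      rw [hginv, hg, mul_mk, mul_mk, ← mk_toWord (x := x), hM, haeq]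
      simp
    have hMchain : List.Chain' R M := by
      have hx2 := chain'_toWord x
      rw [hM] at hx2
      exact ((List.isChain_append.1 hx2).1).tail
    have hMword : (mk M).toWord = M := by
      rw [toWord_mk]; exact reduce_eq_self_of_chain' hMchain
    have hMlen : M.length < N := by
      rw [← hN, hM]; simp
    obtain ⟨c', s, hx', hs, hw'⟩ := ih M.length hMlen (mk M) (by rw [hMword])
    rw [hMword] at hw'
    have hcw : (g * c').toWord = b :: c'.toWord := by
      have hgw : g.toWord = [b] := by
        rw [hg, toWord_mk]; rfl
      rw [toWord_mul_eq, hgw, List.singleton_append]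
      intro p hp q hq
      rw [hgw] at hp
      simp only [List.getLast?_singleton, Option.mem_some_iff] at hp
      subst hp
      obtain ⟨u, hct⟩ : ∃ u, c'.toWord = q :: u := by
        cases hc : c'.toWord with
        | nil => rw [hc] at hq; simp at hq
        | cons v u =>
          rw [hc] at hq
          simp only [List.head?_cons, Option.mem_some_iff] at hq
          exact ⟨u, by rw [hq]⟩
      have hx2 := chain'_toWord x
      rw [hM, hw', hct] at hx2
      simp only [List.cons_append, List.append_assoc] at hx2
      exact (List.isChain_cons_cons.1 hx2).1
    refine ⟨g * c', s, ?_, hs, ?_⟩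
    · rw [hxeq, hx']; group
    · rw [hcw, invRev_cons, hM, hw', haeq]
      simp [List.append_assoc]

lemma not_cyc_conj (b : α × Bool) (X m : List (α × Bool)) (hm : Cyc m)
    (h : m = b :: X ++ [(b.1, !b.2)]) : False := by
  have h1 : m.head? = some b := by rw [h]; simp
  have h2 : m.getLast? = some (b.1, !b.2) := by
    rw [h, List.getLast?_concat]
  exact hm (b.1, !b.2) (by rw [h2]; rfl) b (by rw [h1]; rfl) ⟨rfl, rfl⟩

lemma peel_unique (c : List (α × Bool)) : ∀ (d m m' : List (α × Bool)),
    m ≠ [] → m' ≠ [] → Cyc m → Cyc m' →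
    c ++ m ++ invRev c = d ++ m' ++ invRev d → c = d ∧ m = m' := by
  induction c with
  | nil =>
    intro d m m' hm hm' hcm hcm' h
    cases d with
    | nil =>
      rw [invRev_empty] at h
      simp only [List.append_nil, List.nil_append] at h
      exact ⟨rfl, h⟩
    | cons q d' =>
      exfalso
      rw [invRev_empty, invRev_cons] at h
      simp only [List.append_nil, List.nil_append] at h
      exact not_cyc_conj q (d' ++ m' ++ invRev d') m hcm (by rw [h]; simp)
  | cons p c' ihc =>
    intro d m m' hm hm' hcm hcm' h
    cases d with
    | nil =>
      exfalso
      rw [invRev_empty, invRev_cons] at h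
      simp only [List.append_nil, List.nil_append] at h
      exact not_cyc_conj p (c' ++ m ++ invRev c') m' hcm' (by rw [← h]; simp)
    | cons q d' =>
      rw [invRev_cons, invRev_cons] at h
      have h' : p :: ((c' ++ m ++ invRev c') ++ [(p.1, !p.2)]) =
          q :: ((d' ++ m' ++ invRev d') ++ [(q.1, !q.2)]) := by
        simpa only [List.cons_append, List.append_assoc] using h
      injection h' with hpq h2
      obtain ⟨h4, -⟩ := List.append_inj' h2 rfl
      obtain ⟨hc, hm2⟩ := ihc d' m m' hm hm' hcm hcm' h4
      exact ⟨by rw [hpq, hc], hm2⟩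

lemma conj_pow_eq {G : Type*} [Group G] (c s : G) (k : ℕ) :
    (c * s * c⁻¹) ^ k = c * s ^ k * c⁻¹ := by
  have : c * s * c⁻¹ = (MulAut.conj c) s := by simp [MulAut.conj_apply]
  rw [this, ← map_pow]
  simp [MulAut.conj_apply]

/-- The reduced word of `c * s ^ k * c⁻¹` for a reduced conjugacy decomposition. -/
lemma toWord_conj_pow {c s : FreeGroup α} (hs : Cyc s.toWord)
    (hword : List.Chain' R (c.toWord ++ s.toWord ++ invRev c.toWord))
    (hsne : s.toWord ≠ []) {k : ℕ} (hk : k ≠ 0) :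
    (c * s ^ k * c⁻¹).toWord =
      c.toWord ++ (List.replicate k s.toWord).flatten ++ invRev c.toWord := by
  have hf := toWord_pow hs k
  have h1 : (c * s ^ k).toWord = c.toWord ++ (List.replicate k s.toWord).flatten := by
    rw [toWord_mul_eq, hf]
    intro p hp q hq
    rw [hf, head?_flatten_replicate hk hsne] at hq
    have hj := (List.isChain_append.1 (by rwa [List.append_assoc] at hword)).2.2
    refine hj p hp q ?_
    rw [head?_append_of_ne_nil hsne]
    exact hq
  have h2 : (c * s ^ k * c⁻¹).toWord = (c * s ^ k).toWord ++ invRev c.toWord := by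
    rw [toWord_mul_eq, toWord_inv]
    intro p hp q hq
    rw [h1, getLast?_append_of_ne_nil (flatten_replicate_ne_nil hk hsne),
      getLast?_flatten_replicate hk hsne] at hp
    have hj := (List.isChain_append.1 hword).2.2
    refine hj p ?_ q (by rwa [toWord_inv] at hq)
    rw [getLast?_append_of_ne_nil hsne]
    exact hp
  rw [h2, h1]

lemma pow_left_injective {k : ℕ} (hk : k ≠ 0) {x y : FreeGroup α}
    (h : x ^ k = y ^ k) : x = y := by
  obtain ⟨c, s, hx, hs, hxw⟩ := exists_decomp x
  obtain ⟨d, t, hy, ht, hyw⟩ := exists_decomp y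
  have hxk : x ^ k = c * s ^ k * c⁻¹ := by rw [hx, conj_pow_eq]
  have hyk : y ^ k = d * t ^ k * d⁻¹ := by rw [hy, conj_pow_eq]
  rcases eq_or_ne s.toWord [] with hsnil | hsne
  · have hs1 : s = 1 := toWord_eq_nil_iff.1 hsnil
    have hx1 : x = 1 := by rw [hx, hs1]; group
    rcases eq_or_ne t.toWord [] with htnil | htne
    · have ht1 : t = 1 := toWord_eq_nil_iff.1 htnil
      have hy1 : y = 1 := by rw [hy, ht1]; group
      rw [hx1, hy1]
    · exfalso
      have hyk1 : y ^ k = 1 := by rw [← h, hx1, one_pow]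
      have := toWord_conj_pow ht (hyw ▸ chain'_toWord y) htne hk
      rw [← hyk, hyk1, toWord_one] at this
      exact flatten_replicate_ne_nil hk htne (by
        have := this.symm
        simpa using (List.append_eq_nil_iff.1 ((List.append_eq_nil_iff.1 this).1)).2)
  rcases eq_or_ne t.toWord [] with htnil | htne
  · exfalso
    have ht1 : t = 1 := toWord_eq_nil_iff.1 htnil
    have hy1 : y = 1 := by rw [hy, ht1]; group
    have hxk1 : x ^ k = 1 := by rw [h, hy1, one_pow]
    have := toWord_conj_pow hs (hxw ▸ chain'_toWord x) hsne hk
    rw [← hxk, hxk1, toWord_one] at this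
    exact flatten_replicate_ne_nil hk hsne (by
      have := this.symm
      simpa using (List.append_eq_nil_iff.1 ((List.append_eq_nil_iff.1 this).1)).2)
  · -- main case
    have hXw := toWord_conj_pow hs (hxw ▸ chain'_toWord x) hsne hk
    have hYw := toWord_conj_pow ht (hyw ▸ chain'_toWord y) htne hk
    have heq : c.toWord ++ (List.replicate k s.toWord).flatten ++ invRev c.toWord =
        d.toWord ++ (List.replicate k t.toWord).flatten ++ invRev d.toWord := by
      rw [← hXw, ← hYw, ← hxk, ← hyk, h]
    have hcycF : Cyc (List.replicate k s.toWord).flatten := by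
      intro p hp q hq
      rw [getLast?_flatten_replicate hk hsne] at hp
      rw [head?_flatten_replicate hk hsne] at hq
      exact hs p hp q hq
    have hcycG : Cyc (List.replicate k t.toWord).flatten := by
      intro p hp q hq
      rw [getLast?_flatten_replicate hk htne] at hp
      rw [head?_flatten_replicate hk htne] at hq
      exact ht p hp q hq
    obtain ⟨hcd, hF⟩ := peel_unique c.toWord d.toWord _ _
      (flatten_replicate_ne_nil hk hsne) (flatten_replicate_ne_nil hk htne)
      hcycF hcycG heq
    have hlen : s.toWord.length = t.toWord.length := by
      have := congrArg List.length hF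
      simp only [List.length_flatten, List.map_replicate, List.sum_replicate,
        smul_eq_mul] at this
      exact Nat.eq_of_mul_eq_mul_left (Nat.pos_of_ne_zero hk) this
    have hst : s.toWord = t.toWord := by
      obtain ⟨m, rfl⟩ := Nat.exists_eq_succ_of_ne_zero hk
      rw [List.replicate_succ, List.flatten_cons, List.replicate_succ,
        List.flatten_cons] at hF
      have h1 := congrArg (List.take s.toWord.length) hF
      rwa [List.take_left, hlen, List.take_left] at h1
    have hs' : s = t := toWord_injective hst
    have hc' : c = d := toWord_injective hcd
    rw [hx, hy, hs', hc']

lemma zpow_left_injective {k : ℤ} (hk : k ≠ 0) {x y : FreeGroup α}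
    (h : x ^ k = y ^ k) : x = y := by
  rcases lt_or_gt_of_ne hk with hneg | hpos
  · refine pow_left_injective (k := (-k).toNat) (by omega) ?_
    apply inv_injective
    rw [← zpow_natCast, ← zpow_natCast, Int.toNat_of_nonneg (by omega),
      ← zpow_neg, ← zpow_neg, neg_neg, h]
  · refine pow_left_injective (k := k.toNat) (by omega) ?_
    rw [← zpow_natCast, ← zpow_natCast, Int.toNat_of_nonneg (by omega), h]

end UniqueRoots


def Achiral {n : ℕ} (w : FreeGroup (Fin n)) : Prop :=
  ∃ ψ : FreeGroup (Fin n) →* FreeGroup (Fin n), ψ w = w⁻¹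

theorem achiral_of_achiral_zpow {n : ℕ} (w : FreeGroup (Fin n)) (k : ℤ) (hk : k ≠ 0)
    (hw : Achiral (w ^ k)) : Achiral w := by
  obtain ⟨ψ, hψ⟩ := hw
  refine ⟨ψ, ?_⟩
  refine UniqueRoots.zpow_left_injective hk (k := k) (x := ψ w) (y := w⁻¹) ?_
  rw [← map_zpow, hψ, inv_zpow]
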